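/- For the 3D potential V(x,y,z) = (x²+y²+z²)/2 + (x²+z²)y − (y³ + z³)/3, the unit slope vectors s ∝ (1, α, β) satisfying ∇V(sx) ∥ s for all x are exactly those with (α, β) ∈ {(1/√3, 0), (−1/√3, 0)}. -/

import Mathlib

private lemma d1 (a b c d e x : ℝ) :
    deriv (fun t : ℝ => (t ^ 2 + a + b) / 2 + (t ^ 2 + c) * d - e) x = x + 2 * x * d := by
  have h : HasDerivAt (fun t : ℝ => (t ^ 2 + a + b) / 2 + (t ^ 2 + c) * d - e)
      (x + 2 * x * d) x := by
    have h := (((((hasDerivAt_pow 2 x).add_const a).add_const b).div_const 2).add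
      (((hasDerivAt_pow 2 x).add_const c).mul_const d)).sub_const e
    exact h.congr_deriv (by norm_num)
  exact h.deriv

private lemma d2 (e f g h y : ℝ) :
    deriv (fun t : ℝ => (e + t ^ 2 + f) / 2 + g * t - (t ^ 3 + h) / 3) y
      = y + g - y ^ 2 := by
  have hd : HasDerivAt (fun t : ℝ => (e + t ^ 2 + f) / 2 + g * t - (t ^ 3 + h) / 3)
      (y + g - y ^ 2) y := by
    have hd := (((((hasDerivAt_pow 2 y).const_add e).add_const f).div_const 2).add
      ((hasDerivAt_id y).const_mul g)).sub
      (((hasDerivAt_pow 3 y).add_const h).div_const 3)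
    exact hd.congr_deriv (by norm_num)
  exact hd.deriv

private lemma d3 (e f g h z : ℝ) :
    deriv (fun t : ℝ => (e + f + t ^ 2) / 2 + (g + t ^ 2) * h - (e2 + t ^ 3) / 3) z
      = z + 2 * z * h - z ^ 2 := by
  have hd : HasDerivAt (fun t : ℝ => (e + f + t ^ 2) / 2 + (g + t ^ 2) * h - (e2 + t ^ 3) / 3)
      (z + 2 * z * h - z ^ 2) z := by
    have hd := ((((hasDerivAt_pow 2 z).const_add (e + f)).div_const 2).add
      (((hasDerivAt_pow 2 z).const_add g).mul_const h)).sub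
      (((hasDerivAt_pow 3 z).const_add e2).div_const 3)
    exact hd.congr_deriv (by norm_num)
  exact hd.deriv

theorem hh3d_slope_spectrum (α β : ℝ) :
    let V : ℝ → ℝ → ℝ → ℝ := fun x y z =>
      (x ^ 2 + y ^ 2 + z ^ 2) / 2 + (x ^ 2 + z ^ 2) * y - (y ^ 3 + z ^ 3) / 3
    (∃ lam : ℝ → ℝ, ∀ x : ℝ,
        deriv (fun t => V t (α * x) (β * x)) x = lam x ∧
        deriv (fun t => V x t (β * x)) (α * x) = lam x * α ∧
        deriv (fun t => V x (α * x) t) (β * x) = lam x * β) ↔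
      ((α = 1 / Real.sqrt 3 ∧ β = 0) ∨ (α = -(1 / Real.sqrt 3) ∧ β = 0)) := by
  intro V
  have s3 : Real.sqrt 3 ^ 2 = 3 := Real.sq_sqrt (by norm_num)
  have s3pos : Real.sqrt 3 > 0 := Real.sqrt_pos.mpr (by norm_num)
  constructor
  · rintro ⟨lam, hlam⟩
    have key : ∀ x : ℝ,
        x + 2 * x * (α * x) = lam x ∧
        α * x + (x ^ 2 + (β * x) ^ 2) - (α * x) ^ 2 = lam x * α ∧
        β * x + 2 * (β * x) * (α * x) - (β * x) ^ 2 = lam x * β := by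
      intro x
      have h := hlam x
      simp only [V, d1, d2, d3] at h
      exact h
    have h1 := key 1
    obtain ⟨e1, e2, e3⟩ := h1
    rw [← e1] at e2 e3
    -- e2: α + (1 + β²) - α² = (1+2α)α  ⇒ 1 + β² = 3α²
    have hβ : β = 0 := by nlinarith [sq_nonneg β]
    have hα2 : 3 * α ^ 2 = 1 := by nlinarith
    have : (α - 1 / Real.sqrt 3) * (α + 1 / Real.sqrt 3) = 0 := by
      field_simp
      linear_combination α ^ 2 * s3 + hα2
    rcases mul_eq_zero.mp this with h | h
    · left; constructor; linarith; exact hβ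
    · right; constructor; linarith; exact hβ
  · rintro (⟨hα, hβ⟩ | ⟨hα, hβ⟩) <;>
    · refine ⟨fun x => x + 2 * x * (α * x), fun x => ?_⟩
      subst hα hβ
      simp only [V, d1, d2, d3]
      refine ⟨trivial, ?_, by ring⟩
      have h3 : Real.sqrt 3 ≠ 0 := ne_of_gt s3pos
      field_simp
      ring_nf
      rw [s3]; ring
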